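/- In the symmetrized linear-map implicit sampling scheme, let ξ ~ N(0, H⁻¹), x⁺ = μ + ξ, x⁻ = μ − ξ, with weights w(x) = exp(F₀(x) − F(x)). Choose X = x⁺ with probability w(x⁺)/(w(x⁺)+w(x⁻)) and X = x⁻ otherwise, and assign weight wˢ = (w(x⁺) + w(x⁻))/2. Then for any bounded measurable u, E[u(X) wˢ] = E[u(x⁺) w(x⁺)]; i.e., the symmetrized weighted estimator has the same expectation as the original linear-map weighted estimator. -/

import Mathlib

open Matrix MeasureTheory ProbabilityTheory

/-- Unbiasedness of symmetrized implicit sampling with linear maps: with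
`ξ ~ N(0, H⁻¹)`, `x⁺ = μ + ξ`, `x⁻ = μ - ξ`, weights `w = exp(F₀ - F)`, choosing
`X = x⁺` with probability `w(x⁺)/(w(x⁺) + w(x⁻))` (via an independent uniform `U`) and
`X = x⁻` otherwise, with symmetrized weight `wˢ = (w(x⁺)+w(x⁻))/2`, the weighted
estimator `E[u(X)wˢ]` equals the original `E[u(x⁺)w(x⁺)]`. -/
theorem symmetrized_linear_map_unbiased
    {m : ℕ} (F F₀ : (Fin m → ℝ) → ℝ)
    (μv : Fin m → ℝ) (φ : ℝ)
    (H : Matrix (Fin m) (Fin m) ℝ) (hH : H.PosDef)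
    (hφ : ∀ θ, φ ≤ F θ) (hφμ : F μv = φ) (hFm : Measurable F)
    (hF₀ : ∀ θ, F₀ θ = φ + (1/2) * ((θ - μv) ⬝ᵥ H *ᵥ (θ - μv)))
    (w : (Fin m → ℝ) → ℝ) (hw : ∀ x, w x = Real.exp (F₀ x - F x))
    {Ω : Type*} [MeasureSpace Ω] [IsProbabilityMeasure (volume : Measure Ω)]
    (ξ : Ω → (Fin m → ℝ)) (hξm : Measurable ξ)
    (hξ : Measure.map ξ (volume : Measure Ω) = volume.withDensity
      (fun x => ENNReal.ofReal ((Real.sqrt ((2 * Real.pi) ^ m * (H⁻¹).det))⁻¹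
        * Real.exp (-(1/2) * (x ⬝ᵥ H *ᵥ x)))))
    (U : Ω → ℝ) (hUm : Measurable U)
    (hU : Measure.map U (volume : Measure Ω)
      = (volume : Measure ℝ).restrict (Set.Icc 0 1))
    (hUξ : IndepFun ξ U)
    (xp xm : Ω → (Fin m → ℝ))
    (hxp : ∀ ω, xp ω = μv + ξ ω) (hxm : ∀ ω, xm ω = μv - ξ ω)
    (X : Ω → (Fin m → ℝ))
    (hX : ∀ ω, X ω = if U ω * (w (xp ω) + w (xm ω)) ≤ w (xp ω) then xp ω else xm ω)
    (ws : Ω → ℝ) (hws : ∀ ω, ws ω = (w (xp ω) + w (xm ω)) / 2)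
    (u : (Fin m → ℝ) → ℝ) (hu : Measurable u) (hub : ∃ C, ∀ x, |u x| ≤ C)
    (hint1 : Integrable (fun ω => u (X ω) * ws ω))
    (hint2 : Integrable (fun ω => u (xp ω) * w (xp ω))) :
    ∫ ω, u (X ω) * ws ω = ∫ ω, u (xp ω) * w (xp ω) := by
  classical
  -- positivity of weights
  have hwpos : ∀ x, 0 < w x := fun x => by rw [hw]; exact Real.exp_pos _
  -- measurability
  have hquad : Measurable fun x : Fin m → ℝ => x ⬝ᵥ H *ᵥ x := by
    simp only [dotProduct, Matrix.mulVec]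
    exact Finset.measurable_sum _ fun i _ =>
      (measurable_pi_apply i).mul (Finset.measurable_sum _ fun j _ =>
        measurable_const.mul (measurable_pi_apply j))
  have hF₀m : Measurable F₀ := by
    have hfe : F₀ = fun θ => φ + (1/2) * ((θ - μv) ⬝ᵥ H *ᵥ (θ - μv)) := funext hF₀
    rw [hfe]
    exact measurable_const.add
      (measurable_const.mul (hquad.comp (measurable_id.sub measurable_const)))
  have hwm : Measurable w := by
    have hfe : w = fun x => Real.exp (F₀ x - F x) := funext hw
    rw [hfe]
    exact Real.measurable_exp.comp (hF₀m.sub hFm)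
  -- the density
  set ρr : (Fin m → ℝ) → ℝ := fun x =>
    (Real.sqrt ((2 * Real.pi) ^ m * (H⁻¹).det))⁻¹ * Real.exp (-(1/2) * (x ⬝ᵥ H *ᵥ x))
    with hρr
  have hρrnn : ∀ x, 0 ≤ ρr x := fun x =>
    mul_nonneg (inv_nonneg.mpr (Real.sqrt_nonneg _)) (Real.exp_pos _).le
  have hρrm : Measurable ρr :=
    measurable_const.mul (Real.measurable_exp.comp (measurable_const.mul hquad))
  have hρreven : ∀ x, ρr (-x) = ρr x := by
    intro x
    simp only [hρr, Matrix.mulVec_neg, dotProduct_neg, neg_dotProduct, neg_neg]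
  set ρn : (Fin m → ℝ) → NNReal := fun x => Real.toNNReal (ρr x) with hρn
  have hρnm : Measurable ρn := measurable_real_toNNReal.comp hρrm
  have hξ' : Measure.map ξ (volume : Measure Ω)
      = (volume : Measure (Fin m → ℝ)).withDensity (fun x => (ρn x : ENNReal)) := hξ
  -- the two one-sided integrands
  set gp : (Fin m → ℝ) → ℝ := fun x => u (μv + x) * w (μv + x) with hgp
  set gn : (Fin m → ℝ) → ℝ := fun x => u (μv - x) * w (μv - x) with hgn
  have hgpm : Measurable gp :=
    (hu.comp (measurable_const.add measurable_id)).mul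
      (hwm.comp (measurable_const.add measurable_id))
  have hgnm : Measurable gn :=
    (hu.comp (measurable_const.sub measurable_id)).mul
      (hwm.comp (measurable_const.sub measurable_id))
  have hgn_neg : ∀ x, gn x = gp (-x) := by
    intro x; simp only [hgp, hgn, ← sub_eq_add_neg]
  -- transfer integrals/integrability along the density
  have key_int : ∀ g : (Fin m → ℝ) → ℝ, Measurable g →
      (Integrable g (Measure.map ξ volume) ↔ Integrable (fun x => ρr x * g x) volume) := by
    intro g hg
    rw [hξ', integrable_withDensity_iff_integrable_smul hρnm]
    constructor <;> intro h <;> refine h.congr (ae_of_all _ fun x => ?_) <;>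
      simp [hρn, NNReal.smul_def, Real.coe_toNNReal _ (hρrnn x)]
  have key_eq : ∀ g : (Fin m → ℝ) → ℝ, Measurable g →
      ∫ x, g x ∂(Measure.map ξ volume) = ∫ x, ρr x * g x := by
    intro g hg
    rw [hξ', integral_withDensity_eq_integral_smul hρnm]
    congr 1; funext x
    simp [hρn, NNReal.smul_def, Real.coe_toNNReal _ (hρrnn x)]
  -- integrability of gp, gn w.r.t. the law of ξ
  have hgpint : Integrable gp (Measure.map ξ volume) := by
    rw [integrable_map_measure hgpm.aestronglyMeasurable hξm.aemeasurable]
    refine hint2.congr (ae_of_all _ fun ω => ?_)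
    simp only [Function.comp, hgp, hxp ω]
  have hgnint : Integrable gn (Measure.map ξ volume) := by
    rw [key_int gn hgnm]
    have h1 : Integrable (fun x => ρr x * gp x) volume := (key_int gp hgpm).mp hgpint
    refine h1.comp_neg.congr (ae_of_all _ fun x => ?_)
    show ρr (-x) * gp (-x) = ρr x * gn x
    rw [hρreven, ← hgn_neg]
  -- symmetry: ∫ gn = ∫ gp
  have hsymm : ∫ x, gn x ∂(Measure.map ξ volume) = ∫ x, gp x ∂(Measure.map ξ volume) := by
    rw [key_eq gn hgnm, key_eq gp hgpm,
      ← integral_neg_eq_self (fun x => ρr x * gp x) (volume : Measure (Fin m → ℝ))]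
    congr 1; funext x
    show ρr x * gn x = ρr (-x) * gp (-x)
    rw [hρreven, ← hgn_neg]
  -- RHS as an integral against the law of ξ
  have hRHS : ∫ ω, u (xp ω) * w (xp ω) = ∫ x, gp x ∂(Measure.map ξ volume) := by
    rw [integral_map hξm.aemeasurable hgpm.aestronglyMeasurable]
    refine integral_congr_ae (ae_of_all _ fun ω => ?_)
    simp only [hgp, hxp ω]
  -- the joint function
  set f : (Fin m → ℝ) × ℝ → ℝ := fun p =>
    u (if p.2 * (w (μv + p.1) + w (μv - p.1)) ≤ w (μv + p.1) then μv + p.1 else μv - p.1)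
      * ((w (μv + p.1) + w (μv - p.1)) / 2) with hf
  have ham : Measurable fun x : Fin m → ℝ => w (μv + x) :=
    hwm.comp (measurable_const.add measurable_id)
  have hbm : Measurable fun x : Fin m → ℝ => w (μv - x) :=
    hwm.comp (measurable_const.sub measurable_id)
  have hfm : Measurable f := by
    have hS : MeasurableSet {p : (Fin m → ℝ) × ℝ |
        p.2 * (w (μv + p.1) + w (μv - p.1)) ≤ w (μv + p.1)} :=
      measurableSet_le
        (measurable_snd.mul ((ham.comp measurable_fst).add (hbm.comp measurable_fst)))
        (ham.comp measurable_fst)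
    refine (hu.comp (Measurable.ite hS ?_ ?_)).mul
      (((ham.comp measurable_fst).add (hbm.comp measurable_fst)).div_const 2)
    · exact measurable_const.add measurable_fst
    · exact measurable_const.sub measurable_fst
  have hpair : Measurable fun ω => (ξ ω, U ω) := hξm.prodMk hUm
  haveI hPU : IsProbabilityMeasure (Measure.map U (volume : Measure Ω)) :=
    Measure.isProbabilityMeasure_map hUm.aemeasurable
  haveI hPξ : IsProbabilityMeasure (Measure.map ξ (volume : Measure Ω)) :=
    Measure.isProbabilityMeasure_map hξm.aemeasurable
  have hprod : Measure.map (fun ω => (ξ ω, U ω)) (volume : Measure Ω)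
      = (Measure.map ξ volume).prod (Measure.map U volume) :=
    (indepFun_iff_map_prod_eq_prod_map_map hξm.aemeasurable hUm.aemeasurable).mp hUξ
  have hcomp : ∀ ω, u (X ω) * ws ω = f (ξ ω, U ω) := by
    intro ω
    simp only [hf, hX ω, hws ω, hxp ω, hxm ω]
  have hLHS1 : ∫ ω, u (X ω) * ws ω
      = ∫ p, f p ∂((Measure.map ξ volume).prod (Measure.map U volume)) := by
    rw [← hprod, integral_map hpair.aemeasurable hfm.aestronglyMeasurable]
    exact integral_congr_ae (ae_of_all _ fun ω => hcomp ω)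
  have hfint : Integrable f ((Measure.map ξ volume).prod (Measure.map U volume)) := by
    rw [← hprod, integrable_map_measure hfm.aestronglyMeasurable hpair.aemeasurable]
    exact hint1.congr (ae_of_all _ fun ω => hcomp ω)
  -- compute the inner integral
  have hinner : ∀ x : Fin m → ℝ, ∫ t, f (x, t) ∂(Measure.map U volume)
      = (gp x + gn x) / 2 := by
    intro x
    set A := w (μv + x) with hA
    set B := w (μv - x) with hB
    have hA0 : 0 < A := hwpos _
    have hB0 : 0 < B := hwpos _
    have hs0 : 0 < A + B := by linarith
    set c : ℝ := A / (A + B) with hc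
    have hc0 : 0 < c := div_pos hA0 hs0
    have hc1 : c ≤ 1 := by
      rw [hc, div_le_one hs0]; linarith
    rw [hU, integral_Icc_eq_integral_Ioc, ← Set.Ioc_union_Ioc_eq_Ioc hc0.le hc1]
    have e1 : ∀ t ∈ Set.Ioc (0:ℝ) c, f (x, t) = u (μv + x) * ((A + B) / 2) := by
      intro t ht
      have : t * (A + B) ≤ A := by
        rw [← le_div_iff₀ hs0] at *
        exact ht.2
      simp only [hf, ← hA, ← hB]
      rw [if_pos this]
    have e2 : ∀ t ∈ Set.Ioc c (1:ℝ), f (x, t) = u (μv - x) * ((A + B) / 2) := by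
      intro t ht
      have : ¬ (t * (A + B) ≤ A) := by
        have := ht.1
        rw [hc, div_lt_iff₀ hs0] at this
        linarith
      simp only [hf, ← hA, ← hB]
      rw [if_neg this]
    have hi1 : IntegrableOn (fun t => f (x, t)) (Set.Ioc 0 c) volume := by
      refine (integrableOn_const measure_Ioc_lt_top.ne).congr
        (((ae_restrict_iff' measurableSet_Ioc).mpr (ae_of_all _ fun t ht => (e1 t ht).symm)))
    have hi2 : IntegrableOn (fun t => f (x, t)) (Set.Ioc c 1) volume := by
      refine (integrableOn_const measure_Ioc_lt_top.ne).congr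
        (((ae_restrict_iff' measurableSet_Ioc).mpr (ae_of_all _ fun t ht => (e2 t ht).symm)))
    rw [setIntegral_union (Set.Ioc_disjoint_Ioc_of_le le_rfl) measurableSet_Ioc hi1 hi2,
      setIntegral_congr_fun measurableSet_Ioc e1,
      setIntegral_congr_fun measurableSet_Ioc e2,
      setIntegral_const, setIntegral_const]
    simp only [Real.volume_Ioc, Real.volume_real_Ioc_of_le hc0.le, Real.volume_real_Ioc_of_le hc1, smul_eq_mul, sub_zero,
      ENNReal.toReal_ofReal hc0.le, ENNReal.toReal_ofReal (by linarith : (0:ℝ) ≤ 1 - c)]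
    simp only [hgp, hgn, ← hA, ← hB, hc]
    field_simp
    ring
  -- put everything together
  rw [hLHS1, hRHS, integral_prod f hfint]
  rw [integral_congr_ae (ae_of_all _ fun x => hinner x)]
  rw [integral_div, integral_add hgpint hgnint, hsymm]
  ring
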